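/- Let G be an r-regular graph of order p with r ≥ 2 and χ_la(G) = χ(G) = χ. Define G₁ = G and G_k = G_{k−1} ∨ G_{k−1} for k ≥ 2. Then G_k is an (r + (2^{k−1} − 1)p)-regular graph of order 2^{k−1}p with χ_la(G_k) = χ(G_k) = 2^{k−1}χ. -/

import Mathlib

open Finset

variable {V : Type*} [Fintype V] [DecidableEq V]

/-- The induced vertex sum `f⁺(v)`: sum of labels of edges incident to `v`. -/
def fplus (G : SimpleGraph V) [DecidableRel G.Adj] (f : Sym2 V → ℕ) (v : V) : ℕ :=
  ∑ e ∈ G.edgeFinset.filter (fun e => v ∈ e), f e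

/-- `f` is a local antimagic labeling of `G`: it is a bijection from the edges of `G`
onto `{1, …, q}` and adjacent vertices get distinct induced sums. -/
def IsLocalAntimagic (G : SimpleGraph V) [DecidableRel G.Adj] (f : Sym2 V → ℕ) : Prop :=
  Set.BijOn f ↑G.edgeFinset ↑(Finset.Icc 1 G.edgeFinset.card) ∧
  ∀ ⦃u v : V⦄, G.Adj u v → fplus G f u ≠ fplus G f v

/-- The number of distinct induced vertex colors of the labeling `f`. -/
def colorCount (G : SimpleGraph V) [DecidableRel G.Adj] (f : Sym2 V → ℕ) : ℕ :=
  (Finset.univ.image (fplus G f)).card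

/-- The local antimagic chromatic number `χ_la(G)`. -/
noncomputable def chiLA (G : SimpleGraph V) [DecidableRel G.Adj] : ℕ :=
  sInf {t | ∃ f : Sym2 V → ℕ, IsLocalAntimagic G f ∧ colorCount G f = t}

/-- Decidability of adjacency for graphs built with `SimpleGraph.fromRel`. -/
instance fromRelDecidable {α : Type*} [DecidableEq α] (r : α → α → Prop) [DecidableRel r] :
    DecidableRel (SimpleGraph.fromRel r).Adj := fun a b =>
  decidable_of_iff _ (SimpleGraph.fromRel_adj r a b).symm

/-- Adjacency relation of the join of two graphs. -/
def joinAdj {α β : Type*} (G : SimpleGraph α) (H : SimpleGraph β) :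
    α ⊕ β → α ⊕ β → Prop
  | Sum.inl a, Sum.inl b => G.Adj a b
  | Sum.inr a, Sum.inr b => H.Adj a b
  | Sum.inl _, Sum.inr _ => True
  | Sum.inr _, Sum.inl _ => True

/-- The join `G ∨ H` of two vertex-disjoint graphs: keep all edges of `G` and `H`,
and add all edges between `V(G)` and `V(H)`. -/
def joinG {α β : Type*} (G : SimpleGraph α) (H : SimpleGraph β) : SimpleGraph (α ⊕ β) where
  Adj := joinAdj G H
  symm := by
    constructor
    rintro (a | a) (b | b) h <;> simp only [joinAdj] at h ⊢
    · exact h.symm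
    · exact h.symm
  loopless := by
    constructor
    rintro (a | a) h <;> simp only [joinAdj] at h
    · exact G.loopless.irrefl a h
    · exact H.loopless.irrefl a h

instance joinGDecidableAdj {α β : Type*} (G : SimpleGraph α) (H : SimpleGraph β)
    [DecidableRel G.Adj] [DecidableRel H.Adj] : DecidableRel (joinG G H).Adj
  | Sum.inl a, Sum.inl b => inferInstanceAs (Decidable (G.Adj a b))
  | Sum.inr a, Sum.inr b => inferInstanceAs (Decidable (H.Adj a b))
  | Sum.inl _, Sum.inr _ => inferInstanceAs (Decidable True)
  | Sum.inr _, Sum.inl _ => inferInstanceAs (Decidable True)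

/-- The vertex type of the `k`-fold iterated self-join. -/
def iterV (α : Type*) : ℕ → Type _
  | 0 => α
  | k + 1 => iterV α k ⊕ iterV α k

instance iterVFintype (α : Type*) [Fintype α] : ∀ k, Fintype (iterV α k)
  | 0 => inferInstanceAs (Fintype α)
  | k + 1 => letI := iterVFintype α k; inferInstanceAs (Fintype (iterV α k ⊕ iterV α k))

instance iterVDecEq (α : Type*) [DecidableEq α] : ∀ k, DecidableEq (iterV α k)
  | 0 => inferInstanceAs (DecidableEq α)
  | k + 1 => letI := iterVDecEq α k; inferInstanceAs (DecidableEq (iterV α k ⊕ iterV α k))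

/-- The iterated self-join: `iterJoin G 0 = G` and `iterJoin G (k+1) = iterJoin G k ∨ iterJoin G k`,
so that `iterJoin G (k-1)` is the graph `G_k` of the paper (`G₁ = G`, `G_k = G_{k-1} ∨ G_{k-1}`). -/
def iterJoin {α : Type*} (G : SimpleGraph α) : ∀ k, SimpleGraph (iterV α k)
  | 0 => G
  | k + 1 => joinG (iterJoin G k) (iterJoin G k)

instance iterJoinDecidableAdj {α : Type*} (G : SimpleGraph α) [DecidableRel G.Adj] :
    ∀ k, DecidableRel (iterJoin G k).Adj
  | 0 => inferInstanceAs (DecidableRel G.Adj)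
  | k + 1 => letI := iterJoinDecidableAdj G k
      inferInstanceAs (DecidableRel (joinG (iterJoin G k) (iterJoin G k)).Adj)


/-- Sum over `Fin n` is invariant under injective reindexing. -/
lemma sum_comp_inj {n : ℕ} (σ : Fin n → Fin n) (hσ : Function.Injective σ) (g : Fin n → ℕ) :
    ∑ j, g (σ j) = ∑ j, g j :=
  Fintype.sum_bijective σ (Finite.injective_iff_bijective.mp hσ) _ _ (fun _ => rfl)

/-- A semi-magic square of order `n`: entries are a bijection onto `{0, …, n²-1}`
with constant row sums and column sums (both equal to `S`). -/
structure SM (n : ℕ) where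
  f : Fin n → Fin n → ℕ
  inj : ∀ i j i' j', f i j = f i' j' → i = i' ∧ j = j'
  lt : ∀ i j, f i j < n * n
  S : ℕ
  row : ∀ i, ∑ j, f i j = S
  col : ∀ j, ∑ i, f i j = S

lemma SM.surj {n : ℕ} (M : SM n) (y : ℕ) (hy : y < n * n) : ∃ i j, M.f i j = y := by
  classical
  set img := (univ : Finset (Fin n × Fin n)).image (fun p => M.f p.1 p.2) with himg
  have hinj : Function.Injective (fun p : Fin n × Fin n => M.f p.1 p.2) := by
    rintro ⟨i, j⟩ ⟨i', j'⟩ h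
    obtain ⟨h1, h2⟩ := M.inj _ _ _ _ h
    exact Prod.ext h1 h2
  have hcard : img.card = n * n := by
    rw [himg, Finset.card_image_of_injective _ hinj, Finset.card_univ, Fintype.card_prod,
      Fintype.card_fin]
  have hsub : img ⊆ Finset.range (n * n) := by
    intro x hx
    obtain ⟨p, _, rfl⟩ := Finset.mem_image.mp hx
    exact Finset.mem_range.mpr (M.lt _ _)
  have heq : img = Finset.range (n * n) :=
    Finset.eq_of_subset_of_card_le hsub (by rw [hcard, Finset.card_range])
  have : y ∈ img := heq ▸ Finset.mem_range.mpr hy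
  obtain ⟨p, _, hp⟩ := Finset.mem_image.mp this
  exact ⟨p.1, p.2, hp⟩

lemma bijOn_card {α β : Type*} {f : α → β} {s : Finset α} {t : Finset β}
    (h : Set.BijOn f ↑s ↑t) : s.card = t.card := by
  rw [← Set.ncard_coe_finset, ← Set.ncard_coe_finset, ← h.image_eq,
    Set.ncard_image_of_injOn h.injOn]

section odd

lemma shift_inj {n : ℕ} (hn : 0 < n) (c : ℕ) :
    Function.Injective (fun j : Fin n => (⟨(c + j.val) % n, Nat.mod_lt _ hn⟩ : Fin n)) := by
  intro a b h
  simp only [Fin.mk.injEq] at h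
  have : a.val ≡ b.val [MOD n] := Nat.ModEq.add_left_cancel' c h
  exact Fin.ext ((Nat.mod_eq_of_lt a.isLt) ▸ (Nat.mod_eq_of_lt b.isLt) ▸ this)

lemma shift_sum {n : ℕ} (hn : 0 < n) (c : ℕ) (g : ℕ → ℕ) :
    ∑ j : Fin n, g ((c + j.val) % n) = ∑ j : Fin n, g j.val := by
  have := sum_comp_inj _ (shift_inj hn c) (fun x : Fin n => g x.val)
  simpa using this

lemma shift_sum_id {n : ℕ} (hn : 0 < n) (c : ℕ) :
    ∑ j : Fin n, ((c + j.val) % n) = ∑ j : Fin n, j.val := shift_sum hn c (fun x => x)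

lemma mul2_inj {n : ℕ} (hn : 0 < n) (hodd : Odd n) (c : ℕ) :
    Function.Injective (fun j : Fin n => (⟨(c + 2 * j.val) % n, Nat.mod_lt _ hn⟩ : Fin n)) := by
  intro a b h
  simp only [Fin.mk.injEq] at h
  have h2 : 2 * a.val ≡ 2 * b.val [MOD n] := Nat.ModEq.add_left_cancel' c h
  have : a.val ≡ b.val [MOD n] :=
    Nat.ModEq.cancel_left_of_coprime (Nat.coprime_two_right.mpr hodd) h2
  exact Fin.ext ((Nat.mod_eq_of_lt a.isLt) ▸ (Nat.mod_eq_of_lt b.isLt) ▸ this)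

lemma mul2_sum_id {n : ℕ} (hn : 0 < n) (hodd : Odd n) (c : ℕ) :
    ∑ j : Fin n, ((c + 2 * j.val) % n) = ∑ j : Fin n, j.val := by
  have := sum_comp_inj _ (mul2_inj hn hodd c) (fun x : Fin n => x.val)
  simpa using this

/-- Semi-magic square of odd order. -/
def smOdd (n : ℕ) (h0 : 0 < n) (hodd : Odd n) : SM n where
  f i j := n * ((i.val + j.val) % n) + ((i.val + 2 * j.val) % n)
  inj := by
    intro i j i' j' h
    have hb : (i.val + 2 * j.val) % n < n := Nat.mod_lt _ h0
    have hb' : (i'.val + 2 * j'.val) % n < n := Nat.mod_lt _ h0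
    have h1 : (i.val + j.val) % n = (i'.val + j'.val) % n := by
      have := congrArg (· / n) h
      simpa [Nat.mul_add_div h0, Nat.div_eq_of_lt hb, Nat.div_eq_of_lt hb'] using this
    have h2 : (i.val + 2 * j.val) % n = (i'.val + 2 * j'.val) % n := by
      have := congrArg (· % n) h
      simpa [Nat.mul_add_mod, Nat.mod_eq_of_lt hb, Nat.mod_eq_of_lt hb'] using this
    -- derive j = j'
    have m1 : i.val + j.val ≡ i'.val + j'.val [MOD n] := h1
    have m2 : i.val + 2 * j.val ≡ i'.val + 2 * j'.val [MOD n] := h2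
    have m3 : i.val + j.val + j.val ≡ i'.val + j'.val + j.val [MOD n] := m1.add_right _
    have m4 : i'.val + j'.val + j.val ≡ i'.val + j'.val + j'.val [MOD n] := by
      have e1 : i.val + 2 * j.val = i.val + j.val + j.val := by ring
      have e2 : i'.val + 2 * j'.val = i'.val + j'.val + j'.val := by ring
      exact (m3.symm.trans (e1 ▸ e2 ▸ m2))
    have mj : j.val ≡ j'.val [MOD n] := Nat.ModEq.add_left_cancel' _ m4
    have hj : j = j' := Fin.ext ((Nat.mod_eq_of_lt j.isLt) ▸ (Nat.mod_eq_of_lt j'.isLt) ▸ mj)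
    subst hj
    have mi : i.val ≡ i'.val [MOD n] := by
      have := m1.add_right_cancel' j.val
      exact this
    exact ⟨Fin.ext ((Nat.mod_eq_of_lt i.isLt) ▸ (Nat.mod_eq_of_lt i'.isLt) ▸ mi), rfl⟩
  lt := by
    intro i j
    have ha : (i.val + j.val) % n < n := Nat.mod_lt _ h0
    have hb : (i.val + 2 * j.val) % n < n := Nat.mod_lt _ h0
    calc n * ((i.val + j.val) % n) + ((i.val + 2 * j.val) % n)
        < n * ((i.val + j.val) % n) + n := by omega
      _ = n * ((i.val + j.val) % n + 1) := by ring
      _ ≤ n * n := Nat.mul_le_mul_left n (by omega)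
  S := n * (∑ j : Fin n, j.val) + (∑ j : Fin n, j.val)
  row := by
    intro i
    rw [Finset.sum_add_distrib, ← Finset.mul_sum]
    rw [shift_sum_id h0 i.val, mul2_sum_id h0 hodd i.val]
  col := by
    intro j
    rw [Finset.sum_add_distrib, ← Finset.mul_sum]
    have e1 : ∀ i : Fin n, (i.val + j.val) % n = (j.val + i.val) % n := fun i => by rw [Nat.add_comm]
    have e2 : ∀ i : Fin n, (i.val + 2 * j.val) % n = (2 * j.val + i.val) % n := fun i => by
      rw [Nat.add_comm]
    rw [Finset.sum_congr rfl (fun i _ => e1 i), Finset.sum_congr rfl (fun i _ => e2 i)]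
    rw [shift_sum_id h0 j.val, shift_sum_id h0 (2 * j.val)]

end odd

section four

/-- Dürer's magic square, shifted to entries `0–15`. -/
def durer : Fin 4 → Fin 4 → ℕ :=
  ![![15,2,1,12], ![4,9,10,7], ![8,5,6,11], ![3,14,13,0]]

/-- Semi-magic square of order 4. -/
def sm4 : SM 4 where
  f := durer
  inj := by decide
  lt := by decide
  S := 30
  row := by decide
  col := by decide

end four

section double

/-- Four 2×2 blocks used in the doubling construction. -/
def blkA : Fin 2 → Fin 2 → ℕ := ![![0,3], ![2,1]]
def blkB : Fin 2 → Fin 2 → ℕ := ![![3,0], ![1,2]]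
def blkC : Fin 2 → Fin 2 → ℕ := ![![0,1], ![2,3]]
def blkD : Fin 2 → Fin 2 → ℕ := ![![3,2], ![0,1]]

/-- Block scheme for the doubling construction: which block to use on (broken) diagonal `d`. -/
def sch (m d : ℕ) : Fin 2 → Fin 2 → ℕ :=
  if m % 2 = 0 then (if d % 2 = 0 then blkA else blkB)
  else if d + 4 ≤ m then (if d % 2 = 0 then blkA else blkB)
  else if d + 3 = m then blkC
  else if d + 2 = m then blkD
  else blkB

lemma sch_cases (m d : ℕ) : sch m d = blkA ∨ sch m d = blkB ∨ sch m d = blkC ∨ sch m d = blkD := by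
  unfold sch
  split_ifs <;> tauto

lemma sch_lt (m d : ℕ) (s t : Fin 2) : sch m d s t < 4 := by
  rcases sch_cases m d with h | h | h | h <;> rw [h] <;> revert s t <;> decide

lemma sch_inj (m d : ℕ) (s t s' t' : Fin 2) (h : sch m d s t = sch m d s' t') :
    s = s' ∧ t = t' := by
  rcases sch_cases m d with hc | hc | hc | hc <;> rw [hc] at h <;> revert h <;> revert s t s' t' <;>
    decide

/-- row sums of a 2×2 block -/
def rs (P : Fin 2 → Fin 2 → ℕ) (s : Fin 2) : ℕ := P s 0 + P s 1
/-- column sums of a 2×2 block -/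
def cs (P : Fin 2 → Fin 2 → ℕ) (t : Fin 2) : ℕ := P 0 t + P 1 t

lemma alt_sum (u x y : ℕ) :
    ∑ d ∈ range (2 * u), (if d % 2 = 0 then x else y) = u * (x + y) := by
  induction u with
  | zero => simp
  | succ u ih =>
    have h2 : 2 * (u + 1) = (2 * u + 1) + 1 := by ring
    rw [h2, Finset.sum_range_succ, Finset.sum_range_succ, ih]
    have e1 : (2 * u) % 2 = 0 := by omega
    have e2 : (2 * u + 1) % 2 = 1 := by omega
    rw [e1, e2]
    simp
    ring

lemma sch_row_sum (m : ℕ) (hm : 3 ≤ m) (s : Fin 2) :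
    ∑ d ∈ range m, rs (sch m d) s = 3 * m := by
  have hAB : ∀ d, d % 2 = 0 ∨ d % 2 = 1 := fun d => by omega
  have hA : ∀ s : Fin 2, rs blkA s = 3 := by decide
  have hB : ∀ s : Fin 2, rs blkB s = 3 := by decide
  have hC : ∀ s : Fin 2, rs blkC s + rs blkD s = 6 := by decide
  rcases Nat.even_or_odd m with he | ho
  · have hm2 : m % 2 = 0 := Nat.even_iff.mp he
    have : ∀ d ∈ range m, rs (sch m d) s = 3 := by
      intro d _
      unfold sch
      rw [if_pos hm2]
      rcases hAB d with h | h
      · rw [if_pos h]; exact hA s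
      · rw [if_neg (by omega)]; exact hB s
    rw [Finset.sum_congr rfl this, Finset.sum_const, card_range, smul_eq_mul]
    ring
  · obtain ⟨u, hu⟩ : ∃ u, m = 2 * u + 3 := by
      rcases ho with ⟨w, hw⟩; exact ⟨w - 1, by omega⟩
    subst hu
    have hmo : (2 * u + 3) % 2 = 1 := by omega
    rw [show 2 * u + 3 = (2 * u + 2) + 1 by ring, Finset.sum_range_succ,
        show 2 * u + 2 = (2 * u + 1) + 1 by ring, Finset.sum_range_succ,
        show 2 * u + 1 = (2 * u) + 1 by ring, Finset.sum_range_succ]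
    have e0 : sch (2 * u + 3) (2 * u) = blkC := by
      unfold sch; rw [if_neg (by omega), if_neg (by omega), if_pos (by omega)]
    have e1 : sch (2 * u + 3) (2 * u + 1) = blkD := by
      unfold sch; rw [if_neg (by omega), if_neg (by omega), if_neg (by omega), if_pos (by omega)]
    have e2 : sch (2 * u + 3) (2 * u + 2) = blkB := by
      unfold sch
      rw [if_neg (by omega), if_neg (by omega), if_neg (by omega), if_neg (by omega)]
    have enorm : ∀ d ∈ range (2 * u), rs (sch (2 * u + 3) d) s
        = (if d % 2 = 0 then rs blkA s else rs blkB s) := by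
      intro d hd
      rw [mem_range] at hd
      unfold sch
      rw [if_neg (by omega), if_pos (by omega)]
      split_ifs <;> rfl
    rw [Finset.sum_congr rfl enorm, alt_sum, e0, e1, e2, hA s, hB s]
    have h6 := hC s
    omega

lemma sch_col_sum (m : ℕ) (hm : 3 ≤ m) (t : Fin 2) :
    ∑ d ∈ range m, cs (sch m d) t = 3 * m := by
  have hAB6 : ∀ t : Fin 2, cs blkA t + cs blkB t = 6 := by decide
  have hCDB9 : ∀ t : Fin 2, cs blkC t + cs blkD t + cs blkB t = 9 := by decide
  rcases Nat.even_or_odd m with he | ho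
  · obtain ⟨u, hu⟩ : ∃ u, m = 2 * u := by rcases he with ⟨w, hw⟩; exact ⟨w, by omega⟩
    subst hu
    have : ∀ d ∈ range (2 * u), cs (sch (2 * u) d) t
        = (if d % 2 = 0 then cs blkA t else cs blkB t) := by
      intro d _
      unfold sch
      rw [if_pos (by omega)]
      split_ifs <;> rfl
    rw [Finset.sum_congr rfl this, alt_sum, hAB6 t]
    omega
  · obtain ⟨u, hu⟩ : ∃ u, m = 2 * u + 3 := by
      rcases ho with ⟨w, hw⟩; exact ⟨w - 1, by omega⟩
    subst hu
    rw [show 2 * u + 3 = (2 * u + 2) + 1 by ring, Finset.sum_range_succ,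
        show 2 * u + 2 = (2 * u + 1) + 1 by ring, Finset.sum_range_succ,
        show 2 * u + 1 = (2 * u) + 1 by ring, Finset.sum_range_succ]
    have e0 : sch (2 * u + 3) (2 * u) = blkC := by
      unfold sch; rw [if_neg (by omega), if_neg (by omega), if_pos (by omega)]
    have e1 : sch (2 * u + 3) (2 * u + 1) = blkD := by
      unfold sch; rw [if_neg (by omega), if_neg (by omega), if_neg (by omega), if_pos (by omega)]
    have e2 : sch (2 * u + 3) (2 * u + 2) = blkB := by
      unfold sch
      rw [if_neg (by omega), if_neg (by omega), if_neg (by omega), if_neg (by omega)]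
    have enorm : ∀ d ∈ range (2 * u), cs (sch (2 * u + 3) d) t
        = (if d % 2 = 0 then cs blkA t else cs blkB t) := by
      intro d hd
      rw [mem_range] at hd
      unfold sch
      rw [if_neg (by omega), if_pos (by omega)]
      split_ifs <;> rfl
    rw [Finset.sum_congr rfl enorm, alt_sum, hAB6 t, e0, e1, e2]
    have h9 := hCDB9 t
    omega

end double

/-- pair equivalence `Fin m × Fin 2 ≃ Fin (2 * m)` sending `(a, b)` to `2a + b`. -/
def pairEquiv (m : ℕ) : Fin m × Fin 2 ≃ Fin (2 * m) where
  toFun p := ⟨2 * p.1.val + p.2.val, by omega⟩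
  invFun j := (⟨j.val / 2, by omega⟩, ⟨j.val % 2, by omega⟩)
  left_inv p := by
    ext
    · simp only []; omega
    · simp only []; omega
  right_inv j := by
    ext
    simp only []
    omega

/-- components -/
def fdiv {m : ℕ} (x : Fin (2 * m)) : Fin m := ⟨x.val / 2, by omega⟩
def fmod2 {m : ℕ} (x : Fin (2 * m)) : Fin 2 := ⟨x.val % 2, by omega⟩

lemma fdiv_pairEquiv {m : ℕ} (a : Fin m) (b : Fin 2) : fdiv (pairEquiv m (a, b)) = a := by
  apply Fin.ext
  show (2 * a.val + b.val) / 2 = a.val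
  omega

lemma fmod2_pairEquiv {m : ℕ} (a : Fin m) (b : Fin 2) : fmod2 (pairEquiv m (a, b)) = b := by
  apply Fin.ext
  show (2 * a.val + b.val) % 2 = b.val
  omega

lemma split4 {x x' e e' : ℕ} (he : e < 4) (he' : e' < 4) (h : 4 * x + e = 4 * x' + e') :
    x = x' ∧ e = e' := by omega

lemma lt4sq {m x e : ℕ} (hx : x < m * m) (he : e < 4) : 4 * x + e < 2 * m * (2 * m) := by
  have h3 : 2 * m * (2 * m) = 4 * (m * m) := by ring
  omega

/-- reindexing `a ↦ (c + a) % m` as `Fin m → Fin m` for sums of `g ∘ val`. -/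
lemma shift_sum_fin {m : ℕ} (h0 : 0 < m) (c : ℕ) (g : ℕ → ℕ) :
    ∑ a : Fin m, g ((a.val + c) % m) = ∑ d ∈ range m, g d := by
  have e : ∀ a : Fin m, (a.val + c) % m = (c + a.val) % m := fun a => by rw [Nat.add_comm]
  rw [Finset.sum_congr rfl (fun a _ => by rw [e a])]
  rw [shift_sum h0 c g, ← Fin.sum_univ_eq_sum_range]

/-- reindexing `a ↦ (c + (m - a)) % m`. -/
lemma revshift_inj {m : ℕ} (h0 : 0 < m) (c : ℕ) (hc : m ≤ c) :
    Function.Injective (fun a : Fin m => (⟨(c - a.val) % m, Nat.mod_lt _ h0⟩ : Fin m)) := by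
  intro a b h
  simp only [Fin.mk.injEq] at h
  have h1 : c - a.val + (a.val + b.val) = c + b.val := by omega
  have h2 : c - b.val + (a.val + b.val) = c + a.val := by omega
  have h3 : c - a.val ≡ c - b.val [MOD m] := h
  have h4 : c + b.val ≡ c + a.val [MOD m] := by
    have := h3.add_right (a.val + b.val)
    rwa [h1, h2] at this
  have h5 : b.val ≡ a.val [MOD m] := Nat.ModEq.add_left_cancel' c h4
  unfold Nat.ModEq at h5
  rw [Nat.mod_eq_of_lt a.isLt, Nat.mod_eq_of_lt b.isLt] at h5
  exact Fin.ext h5.symm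

lemma revshift_sum {m : ℕ} (h0 : 0 < m) (c : ℕ) (hc : m ≤ c) (g : ℕ → ℕ) :
    ∑ a : Fin m, g ((c - a.val) % m) = ∑ d ∈ range m, g d := by
  have := sum_comp_inj _ (revshift_inj h0 c hc) (fun x : Fin m => g x.val)
  simp only at this
  rw [this, ← Fin.sum_univ_eq_sum_range]

/-- Doubling a semi-magic square. -/
def SM.double {m : ℕ} (hm : 3 ≤ m) (M : SM m) : SM (2 * m) where
  f i j := 4 * M.f (fdiv i) (fdiv j) +
    sch m (((fdiv j).val + (m - (fdiv i).val)) % m) (fmod2 i) (fmod2 j)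
  inj := by
    intro i j i' j' h
    obtain ⟨hM, hE⟩ := split4 (sch_lt _ _ _ _) (sch_lt _ _ _ _) h
    obtain ⟨hii, hjj⟩ := M.inj _ _ _ _ hM
    rw [← hii, ← hjj] at hE
    obtain ⟨hs, ht⟩ := sch_inj _ _ _ _ _ _ hE
    have h1 : i.val / 2 = i'.val / 2 := congrArg Fin.val hii
    have h2 : j.val / 2 = j'.val / 2 := congrArg Fin.val hjj
    have h3 : i.val % 2 = i'.val % 2 := congrArg Fin.val hs
    have h4 : j.val % 2 = j'.val % 2 := congrArg Fin.val ht
    exact ⟨Fin.ext (by omega), Fin.ext (by omega)⟩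
  lt := fun i j => lt4sq (M.lt _ _) (sch_lt _ _ _ _)
  S := 8 * M.S + 3 * m
  row := by
    intro i
    have h0 : 0 < m := by omega
    rw [← Equiv.sum_comp (pairEquiv m), Fintype.sum_prod_type]
    simp only [fdiv_pairEquiv, fmod2_pairEquiv]
    rw [Finset.sum_congr rfl (fun a _ => Fin.sum_univ_two _)]
    have step : ∀ a : Fin m,
        (4 * M.f (fdiv i) a + sch m ((a.val + (m - (fdiv i).val)) % m) (fmod2 i) 0) +
        (4 * M.f (fdiv i) a + sch m ((a.val + (m - (fdiv i).val)) % m) (fmod2 i) 1) =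
        8 * M.f (fdiv i) a + rs (sch m ((a.val + (m - (fdiv i).val)) % m)) (fmod2 i) := by
      intro a
      unfold rs
      ring
    rw [Finset.sum_congr rfl (fun a _ => step a), Finset.sum_add_distrib, ← Finset.mul_sum,
      M.row]
    have := shift_sum_fin h0 (m - (fdiv i).val) (fun d => rs (sch m d) (fmod2 i))
    rw [this, sch_row_sum m hm]
  col := by
    intro j
    have h0 : 0 < m := by omega
    rw [← Equiv.sum_comp (pairEquiv m), Fintype.sum_prod_type]
    simp only [fdiv_pairEquiv, fmod2_pairEquiv]
    rw [Finset.sum_congr rfl (fun a _ => Fin.sum_univ_two _)]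
    have step : ∀ a : Fin m,
        (4 * M.f a (fdiv j) + sch m (((fdiv j).val + (m - a.val)) % m) 0 (fmod2 j)) +
        (4 * M.f a (fdiv j) + sch m (((fdiv j).val + (m - a.val)) % m) 1 (fmod2 j)) =
        8 * M.f a (fdiv j) + cs (sch m (((fdiv j).val + m - a.val) % m)) (fmod2 j) := by
      intro a
      unfold cs
      have : (fdiv j).val + (m - a.val) = (fdiv j).val + m - a.val := by omega
      rw [this]
      ring
    rw [Finset.sum_congr rfl (fun a _ => step a), Finset.sum_add_distrib, ← Finset.mul_sum,
      M.col]
    have := revshift_sum h0 ((fdiv j).val + m) (by omega) (fun d => cs (sch m d) (fmod2 j))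
    rw [this, sch_col_sum m hm]

/-- Existence of semi-magic squares of every order `n ≥ 3`. -/
theorem sm_exists : ∀ n : ℕ, 3 ≤ n → Nonempty (SM n) := by
  intro n
  induction n using Nat.strong_induction_on with
  | _ n ih =>
    intro hn
    rcases Nat.even_or_odd n with he | ho
    · rcases Nat.lt_or_ge n 5 with h5 | h5
      · have : n = 4 := by
          rcases he with ⟨w, hw⟩; omega
        exact this ▸ ⟨sm4⟩
      · obtain ⟨m, hm⟩ : ∃ m, n = 2 * m := by rcases he with ⟨w, hw⟩; exact ⟨w, by omega⟩
        have hm3 : 3 ≤ m := by omega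
        obtain ⟨M⟩ := ih m (by omega) hm3
        exact hm ▸ ⟨M.double hm3⟩
    · exact ⟨smOdd n (by omega) ho⟩



section JoinLemmas

set_option linter.unusedSectionVars false

open Sum

variable {U : Type*} [Fintype U] [DecidableEq U] (H : SimpleGraph U) [DecidableRel H.Adj]

@[simp] lemma joinG_adj_inl_inl (a b : U) :
    (joinG H H).Adj (inl a) (inl b) ↔ H.Adj a b := Iff.rfl
@[simp] lemma joinG_adj_inr_inr (a b : U) :
    (joinG H H).Adj (inr a) (inr b) ↔ H.Adj a b := Iff.rfl
@[simp] lemma joinG_adj_inl_inr (a b : U) :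
    (joinG H H).Adj (inl a) (inr b) := trivial
@[simp] lemma joinG_adj_inr_inl (a b : U) :
    (joinG H H).Adj (inr a) (inl b) := trivial

lemma joinG_degree_inl (v : U) :
    (joinG H H).degree (inl v) = H.degree v + Fintype.card U := by
  classical
  have hnb : (joinG H H).neighborFinset (inl v) =
      (H.neighborFinset v).image inl ∪ (univ : Finset U).image inr := by
    ext w
    cases w with
    | inl w =>
      simp [SimpleGraph.mem_neighborFinset]
    | inr w =>
      simp [SimpleGraph.mem_neighborFinset]
  rw [SimpleGraph.degree, hnb, Finset.card_union_of_disjoint, Finset.card_image_of_injective _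
    Sum.inl_injective, Finset.card_image_of_injective _ Sum.inr_injective, Finset.card_univ,
    SimpleGraph.degree]
  · rw [Finset.disjoint_left]
    rintro x hx hy
    obtain ⟨a, _, rfl⟩ := Finset.mem_image.mp hx
    obtain ⟨b, _, hb⟩ := Finset.mem_image.mp hy
    exact Sum.inl_ne_inr hb.symm

lemma joinG_degree_inr (v : U) :
    (joinG H H).degree (inr v) = H.degree v + Fintype.card U := by
  classical
  have hnb : (joinG H H).neighborFinset (inr v) =
      (H.neighborFinset v).image inr ∪ (univ : Finset U).image inl := by
    ext w
    cases w with
    | inl w => simp [SimpleGraph.mem_neighborFinset]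
    | inr w => simp [SimpleGraph.mem_neighborFinset]
  rw [SimpleGraph.degree, hnb, Finset.card_union_of_disjoint, Finset.card_image_of_injective _
    Sum.inr_injective, Finset.card_image_of_injective _ Sum.inl_injective, Finset.card_univ,
    SimpleGraph.degree]
  · rw [Finset.disjoint_left]
    rintro x hx hy
    obtain ⟨a, _, rfl⟩ := Finset.mem_image.mp hx
    obtain ⟨b, _, hb⟩ := Finset.mem_image.mp hy
    exact Sum.inl_ne_inr hb

lemma joinG_regular {s : ℕ} (hreg : H.IsRegularOfDegree s) :
    (joinG H H).IsRegularOfDegree (s + Fintype.card U) := by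
  intro v
  cases v with
  | inl v => rw [joinG_degree_inl, hreg v]
  | inr v => rw [joinG_degree_inr, hreg v]

/-- the three pieces of the edge set of the join -/
def jE1 : Finset (Sym2 (U ⊕ U)) := H.edgeFinset.image (Sym2.map inl)
def jE2 : Finset (Sym2 (U ⊕ U)) := H.edgeFinset.image (Sym2.map inr)
def jE3 (_H : SimpleGraph U) : Finset (Sym2 (U ⊕ U)) :=
  (univ : Finset (U × U)).image (fun p => s(inl p.1, inr p.2))

lemma mem_jE1 (e : Sym2 (U ⊕ U)) :
    e ∈ jE1 H ↔ ∃ a b, H.Adj a b ∧ e = s(inl a, inl b) := by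
  constructor
  · intro he
    obtain ⟨e', he', rfl⟩ := Finset.mem_image.mp he
    induction e' with
    | _ a b =>
      exact ⟨a, b, SimpleGraph.mem_edgeFinset.mp he', rfl⟩
  · rintro ⟨a, b, hab, rfl⟩
    exact Finset.mem_image.mpr ⟨s(a, b), SimpleGraph.mem_edgeFinset.mpr hab, rfl⟩

lemma mem_jE2 (e : Sym2 (U ⊕ U)) :
    e ∈ jE2 H ↔ ∃ a b, H.Adj a b ∧ e = s(inr a, inr b) := by
  constructor
  · intro he
    obtain ⟨e', he', rfl⟩ := Finset.mem_image.mp he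
    induction e' with
    | _ a b =>
      exact ⟨a, b, SimpleGraph.mem_edgeFinset.mp he', rfl⟩
  · rintro ⟨a, b, hab, rfl⟩
    exact Finset.mem_image.mpr ⟨s(a, b), SimpleGraph.mem_edgeFinset.mpr hab, rfl⟩

lemma mem_jE3 (e : Sym2 (U ⊕ U)) :
    e ∈ jE3 H ↔ ∃ a b, e = s(inl a, inr b) := by
  constructor
  · intro he
    obtain ⟨p, _, rfl⟩ := Finset.mem_image.mp he
    exact ⟨p.1, p.2, rfl⟩
  · rintro ⟨a, b, rfl⟩
    exact Finset.mem_image.mpr ⟨(a, b), Finset.mem_univ _, rfl⟩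

lemma joinG_edgeFinset :
    (joinG H H).edgeFinset = jE1 H ∪ jE2 H ∪ jE3 H := by
  ext e
  induction e with
  | _ x y =>
    rw [Finset.mem_union, Finset.mem_union, mem_jE1, mem_jE2, mem_jE3,
      SimpleGraph.mem_edgeFinset, SimpleGraph.mem_edgeSet]
    cases x with
    | inl a =>
      cases y with
      | inl b =>
        simp only [joinG_adj_inl_inl]
        constructor
        · intro h; exact Or.inl (Or.inl ⟨a, b, h, rfl⟩)
        · rintro ((⟨a', b', h, he⟩ | ⟨a', b', h, he⟩) | ⟨a', b', he⟩) <;>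
            rw [Sym2.eq_iff] at he
          · rcases he with ⟨⟨rfl⟩, ⟨rfl⟩⟩ | ⟨⟨rfl⟩, ⟨rfl⟩⟩
            · exact h
            · exact h.symm
          · rcases he with ⟨h1, _⟩ | ⟨h1, _⟩ <;> exact absurd h1 (by simp)
          · rcases he with ⟨_, h1⟩ | ⟨h1, _⟩ <;> exact absurd h1 (by simp)
      | inr b =>
        simp only [joinG_adj_inl_inr, true_iff]
        exact Or.inr ⟨a, b, rfl⟩
    | inr a =>
      cases y with
      | inl b =>
        simp only [joinG_adj_inr_inl, true_iff]
        exact Or.inr ⟨b, a, Sym2.eq_swap⟩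
      | inr b =>
        simp only [joinG_adj_inr_inr]
        constructor
        · intro h; exact Or.inl (Or.inr ⟨a, b, h, rfl⟩)
        · rintro ((⟨a', b', h, he⟩ | ⟨a', b', h, he⟩) | ⟨a', b', he⟩) <;>
            rw [Sym2.eq_iff] at he
          · rcases he with ⟨h1, _⟩ | ⟨h1, _⟩ <;> exact absurd h1 (by simp)
          · rcases he with ⟨⟨rfl⟩, ⟨rfl⟩⟩ | ⟨⟨rfl⟩, ⟨rfl⟩⟩
            · exact h
            · exact h.symm
          · rcases he with ⟨h1, _⟩ | ⟨_, h1⟩ <;> exact absurd h1 (by simp)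

lemma disj_jE12 : Disjoint (jE1 H) (jE2 H) := by
  rw [Finset.disjoint_left]
  intro e h1 h2
  obtain ⟨a, b, _, rfl⟩ := (mem_jE1 H e).mp h1
  obtain ⟨a', b', _, he⟩ := (mem_jE2 H _).mp h2
  rw [Sym2.eq_iff] at he
  rcases he with ⟨h, _⟩ | ⟨h, _⟩ <;> exact absurd h (by simp)

lemma disj_jE13 : Disjoint (jE1 H) (jE3 H) := by
  rw [Finset.disjoint_left]
  intro e h1 h2
  obtain ⟨a, b, _, rfl⟩ := (mem_jE1 H e).mp h1
  obtain ⟨a', b', he⟩ := (mem_jE3 H _).mp h2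
  rw [Sym2.eq_iff] at he
  rcases he with ⟨_, h⟩ | ⟨h, _⟩ <;> exact absurd h (by simp)

lemma disj_jE23 : Disjoint (jE2 H) (jE3 H) := by
  rw [Finset.disjoint_left]
  intro e h1 h2
  obtain ⟨a, b, _, rfl⟩ := (mem_jE2 H e).mp h1
  obtain ⟨a', b', he⟩ := (mem_jE3 H _).mp h2
  rw [Sym2.eq_iff] at he
  rcases he with ⟨h, _⟩ | ⟨_, h⟩ <;> exact absurd h (by simp)

lemma disj_jE123 : Disjoint (jE1 H ∪ jE2 H) (jE3 H) :=
  Finset.disjoint_union_left.mpr ⟨disj_jE13 H, disj_jE23 H⟩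

lemma card_jE1 : (jE1 H).card = H.edgeFinset.card :=
  Finset.card_image_of_injective _ (Sym2.map.injective inl_injective)

lemma card_jE2 : (jE2 H).card = H.edgeFinset.card :=
  Finset.card_image_of_injective _ (Sym2.map.injective inr_injective)

lemma cross_inj : Function.Injective (fun p : U × U => s(inl p.1, inr p.2)) := by
  rintro ⟨a, b⟩ ⟨c, d⟩ h
  simp only [Sym2.eq_iff] at h
  rcases h with ⟨h1, h2⟩ | ⟨h1, _⟩
  · rw [inl.injEq] at h1; rw [inr.injEq] at h2
    exact Prod.ext h1 h2
  · exact absurd h1 (by simp)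

lemma card_jE3 : (jE3 H).card = Fintype.card U * Fintype.card U := by
  rw [jE3, Finset.card_image_of_injective _ (cross_inj), Finset.card_univ, Fintype.card_prod]

lemma joinG_card_edgeFinset :
    (joinG H H).edgeFinset.card
      = 2 * H.edgeFinset.card + Fintype.card U * Fintype.card U := by
  rw [joinG_edgeFinset, Finset.card_union_of_disjoint (disj_jE123 H),
    Finset.card_union_of_disjoint (disj_jE12 H), card_jE1, card_jE2, card_jE3]
  ring

end JoinLemmas


section Labeling

set_option linter.unusedSectionVars false

open Sum

variable {U : Type*} [Fintype U] [DecidableEq U] (H : SimpleGraph U) [DecidableRel H.Adj]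

/-- the labeling function of the join, on ordered pairs -/
noncomputable def jlFun (f : Sym2 U → ℕ) (q : ℕ) (M : SM (Fintype.card U)) : U ⊕ U → U ⊕ U → ℕ
  | inl a, inl b => f s(a, b)
  | inr a, inr b => f s(a, b) + q
  | inl a, inr b => 2 * q + 1 + M.f (Fintype.equivFin U a) (Fintype.equivFin U b)
  | inr a, inl b => 2 * q + 1 + M.f (Fintype.equivFin U b) (Fintype.equivFin U a)

lemma jlFun_symm (f : Sym2 U → ℕ) (q : ℕ) (M : SM (Fintype.card U)) :
    ∀ x y, jlFun f q M x y = jlFun f q M y x := by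
  rintro (a | a) (b | b) <;> simp only [jlFun] <;> first | rfl | rw [Sym2.eq_swap]

/-- the local antimagic labeling of the join -/
noncomputable def joinLabel (f : Sym2 U → ℕ) (q : ℕ) (M : SM (Fintype.card U)) : Sym2 (U ⊕ U) → ℕ :=
  Sym2.lift ⟨jlFun f q M, jlFun_symm f q M⟩

variable (f : Sym2 U → ℕ) (q : ℕ) (M : SM (Fintype.card U))

@[simp] lemma joinLabel_ll (a b : U) : joinLabel f q M s(inl a, inl b) = f s(a, b) := rfl
@[simp] lemma joinLabel_rr (a b : U) : joinLabel f q M s(inr a, inr b) = f s(a, b) + q := rfl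
@[simp] lemma joinLabel_lr (a b : U) : joinLabel f q M s(inl a, inr b)
    = 2 * q + 1 + M.f (Fintype.equivFin U a) (Fintype.equivFin U b) := rfl

lemma joinLabel_map_inl (e : Sym2 U) : joinLabel f q M (Sym2.map inl e) = f e := by
  induction e with
  | _ a b => rfl

lemma joinLabel_map_inr (e : Sym2 U) : joinLabel f q M (Sym2.map inr e) = f e + q := by
  induction e with
  | _ a b => rfl

lemma jE1_filter_inl (v : U) : (jE1 H).filter (fun e => inl v ∈ e)
    = (H.edgeFinset.filter (fun e => v ∈ e)).image (Sym2.map inl) := by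
  ext e
  rw [Finset.mem_filter, Finset.mem_image]
  constructor
  · rintro ⟨h1, hv⟩
    obtain ⟨e', he', rfl⟩ := Finset.mem_image.mp h1
    obtain ⟨a, ha, hav⟩ := Sym2.mem_map.mp hv
    refine ⟨e', Finset.mem_filter.mpr ⟨he', ?_⟩, rfl⟩
    rwa [← inl_injective hav]
  · rintro ⟨e', he', rfl⟩
    rw [Finset.mem_filter] at he'
    exact ⟨Finset.mem_image.mpr ⟨e', he'.1, rfl⟩, Sym2.mem_map.mpr ⟨v, he'.2, rfl⟩⟩

lemma jE2_filter_inr (v : U) : (jE2 H).filter (fun e => inr v ∈ e)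
    = (H.edgeFinset.filter (fun e => v ∈ e)).image (Sym2.map inr) := by
  ext e
  rw [Finset.mem_filter, Finset.mem_image]
  constructor
  · rintro ⟨h1, hv⟩
    obtain ⟨e', he', rfl⟩ := Finset.mem_image.mp h1
    obtain ⟨a, ha, hav⟩ := Sym2.mem_map.mp hv
    refine ⟨e', Finset.mem_filter.mpr ⟨he', ?_⟩, rfl⟩
    rwa [← inr_injective hav]
  · rintro ⟨e', he', rfl⟩
    rw [Finset.mem_filter] at he'
    exact ⟨Finset.mem_image.mpr ⟨e', he'.1, rfl⟩, Sym2.mem_map.mpr ⟨v, he'.2, rfl⟩⟩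

lemma jE2_filter_inl (v : U) : (jE2 H).filter (fun e => inl v ∈ e) = ∅ := by
  rw [Finset.eq_empty_iff_forall_notMem]
  intro e he
  rw [Finset.mem_filter] at he
  obtain ⟨a, b, _, rfl⟩ := (mem_jE2 H _).mp he.1
  have := he.2
  rw [Sym2.mem_iff] at this
  rcases this with h | h <;> exact absurd h (by simp)

lemma jE1_filter_inr (v : U) : (jE1 H).filter (fun e => inr v ∈ e) = ∅ := by
  rw [Finset.eq_empty_iff_forall_notMem]
  intro e he
  rw [Finset.mem_filter] at he
  obtain ⟨a, b, _, rfl⟩ := (mem_jE1 H _).mp he.1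
  have := he.2
  rw [Sym2.mem_iff] at this
  rcases this with h | h <;> exact absurd h (by simp)

lemma jE3_filter_inl (v : U) : (jE3 H).filter (fun e => inl v ∈ e)
    = (univ : Finset U).image (fun w => s(inl v, inr w)) := by
  ext e
  rw [Finset.mem_filter, Finset.mem_image]
  constructor
  · rintro ⟨h1, hv⟩
    obtain ⟨a, b, rfl⟩ := (mem_jE3 H _).mp h1
    rw [Sym2.mem_iff] at hv
    rcases hv with h | h
    · rw [inl.injEq] at h
      exact ⟨b, Finset.mem_univ _, by rw [h]⟩
    · exact absurd h (by simp)
  · rintro ⟨w, _, rfl⟩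
    exact ⟨(mem_jE3 H _).mpr ⟨v, w, rfl⟩, Sym2.mem_mk_left _ _⟩

lemma jE3_filter_inr (v : U) : (jE3 H).filter (fun e => inr v ∈ e)
    = (univ : Finset U).image (fun w => s(inl w, inr v)) := by
  ext e
  rw [Finset.mem_filter, Finset.mem_image]
  constructor
  · rintro ⟨h1, hv⟩
    obtain ⟨a, b, rfl⟩ := (mem_jE3 H _).mp h1
    rw [Sym2.mem_iff] at hv
    rcases hv with h | h
    · exact absurd h (by simp)
    · rw [inr.injEq] at h
      exact ⟨a, Finset.mem_univ _, by rw [h]⟩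
  · rintro ⟨w, _, rfl⟩
    exact ⟨(mem_jE3 H _).mpr ⟨w, v, rfl⟩, Sym2.mem_mk_right _ _⟩

lemma card_incident (v : U) : (H.edgeFinset.filter (fun e => v ∈ e)).card = H.degree v := by
  rw [← SimpleGraph.incidenceFinset_eq_filter, SimpleGraph.card_incidenceFinset_eq_degree]

lemma fplus_joinLabel_inl (v : U) :
    fplus (joinG H H) (joinLabel f q M) (inl v)
      = fplus H f v + (Fintype.card U * (2 * q + 1) + M.S) := by
  rw [fplus, joinG_edgeFinset, Finset.filter_union, Finset.filter_union, Finset.sum_union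
    (Finset.disjoint_union_left.mpr ⟨Finset.disjoint_filter_filter (disj_jE13 H),
      Finset.disjoint_filter_filter (disj_jE23 H)⟩),
    Finset.sum_union (Finset.disjoint_filter_filter (disj_jE12 H)),
    jE1_filter_inl, jE2_filter_inl, jE3_filter_inl]
  rw [Finset.sum_image (fun x _ y _ h => Sym2.map.injective inl_injective h),
    Finset.sum_image (fun x _ y _ h => ?_), Finset.sum_empty]
  swap
  · have := (Sym2.eq_iff.mp h)
    rcases this with ⟨_, h2⟩ | ⟨h1, _⟩
    · exact inr_injective h2
    · exact absurd h1 (by simp)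
  have e1 : ∀ e' ∈ H.edgeFinset.filter (fun e => v ∈ e),
      joinLabel f q M (Sym2.map inl e') = f e' := fun e' _ => joinLabel_map_inl f q M e'
  rw [Finset.sum_congr rfl e1]
  have e2 : ∀ w ∈ (univ : Finset U), joinLabel f q M s(inl v, inr w)
      = 2 * q + 1 + M.f (Fintype.equivFin U v) (Fintype.equivFin U w) := fun w _ => rfl
  rw [Finset.sum_congr rfl e2, Finset.sum_add_distrib, Finset.sum_const, Finset.card_univ,
    smul_eq_mul]
  have e3 : ∑ w : U, M.f (Fintype.equivFin U v) (Fintype.equivFin U w)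
      = M.S := by
    rw [Equiv.sum_comp (Fintype.equivFin U) (fun j => M.f (Fintype.equivFin U v) j), M.row]
  rw [e3, fplus]
  ring

lemma fplus_joinLabel_inr {s : ℕ} (hreg : H.IsRegularOfDegree s) (v : U) :
    fplus (joinG H H) (joinLabel f q M) (inr v)
      = fplus H f v + q * s + (Fintype.card U * (2 * q + 1) + M.S) := by
  rw [fplus, joinG_edgeFinset, Finset.filter_union, Finset.filter_union, Finset.sum_union
    (Finset.disjoint_union_left.mpr ⟨Finset.disjoint_filter_filter (disj_jE13 H),
      Finset.disjoint_filter_filter (disj_jE23 H)⟩),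
    Finset.sum_union (Finset.disjoint_filter_filter (disj_jE12 H)),
    jE1_filter_inr, jE2_filter_inr, jE3_filter_inr]
  rw [Finset.sum_image (fun x _ y _ h => Sym2.map.injective inr_injective h),
    Finset.sum_image (fun x _ y _ h => ?_), Finset.sum_empty]
  swap
  · have := (Sym2.eq_iff.mp h)
    rcases this with ⟨h2, _⟩ | ⟨h1, _⟩
    · exact inl_injective h2
    · exact absurd h1 (by simp)
  have e1 : ∀ e' ∈ H.edgeFinset.filter (fun e => v ∈ e),
      joinLabel f q M (Sym2.map inr e') = f e' + q := fun e' _ => joinLabel_map_inr f q M e'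
  rw [Finset.sum_congr rfl e1, Finset.sum_add_distrib, Finset.sum_const, card_incident,
    hreg v, smul_eq_mul]
  have e2 : ∀ w ∈ (univ : Finset U), joinLabel f q M s(inl w, inr v)
      = 2 * q + 1 + M.f (Fintype.equivFin U w) (Fintype.equivFin U v) := fun w _ => rfl
  rw [Finset.sum_congr rfl e2, Finset.sum_add_distrib, Finset.sum_const, Finset.card_univ,
    smul_eq_mul]
  have e3 : ∑ w : U, M.f (Fintype.equivFin U w) (Fintype.equivFin U v)
      = M.S := by
    rw [Equiv.sum_comp (Fintype.equivFin U) (fun j => M.f j (Fintype.equivFin U v)), M.col]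
  rw [e3, fplus]
  ring

end Labeling


section MoreLemmas

set_option linter.unusedSectionVars false

open Sum

variable {U : Type*} [Fintype U] [DecidableEq U] (H : SimpleGraph U) [DecidableRel H.Adj]
  (f : Sym2 U → ℕ) (q : ℕ) (M : SM (Fintype.card U))

lemma fplus_bounds {s : ℕ} (hreg : H.IsRegularOfDegree s) (hs : 1 ≤ s)
    (hf : Set.MapsTo f ↑H.edgeFinset ↑(Finset.Icc 1 q)) (v : U) :
    1 ≤ fplus H f v ∧ fplus H f v ≤ q * s := by
  have hmem : ∀ e ∈ H.edgeFinset.filter (fun e => v ∈ e), 1 ≤ f e ∧ f e ≤ q := by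
    intro e he
    have := hf (Finset.mem_coe.mpr (Finset.mem_filter.mp he).1)
    rw [Finset.mem_coe, Finset.mem_Icc] at this
    exact this
  have hcard : (H.edgeFinset.filter (fun e => v ∈ e)).card = s := by
    rw [card_incident, hreg v]
  rw [fplus]
  constructor
  · have h1 : (H.edgeFinset.filter (fun e => v ∈ e)).Nonempty := by
      rw [← Finset.card_pos, hcard]; omega
    obtain ⟨e0, he0⟩ := h1
    have h2 := (hmem e0 he0).1
    have h3 : f e0 ≤ ∑ e ∈ H.edgeFinset.filter (fun e => v ∈ e), f e :=
      Finset.single_le_sum (fun e _ => Nat.zero_le (f e)) he0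
    omega
  · have h2 : ∑ e ∈ H.edgeFinset.filter (fun e => v ∈ e), f e ≤ s * q := by
      have := Finset.sum_le_card_nsmul (H.edgeFinset.filter (fun e => v ∈ e)) f q
        (fun e he => (hmem e he).2)
      rwa [hcard, smul_eq_mul] at this
    have h3 : s * q = q * s := mul_comm s q
    omega

lemma image_sum_type {α β γ : Type*} [Fintype α] [Fintype β] [DecidableEq γ]
    (g : α ⊕ β → γ) :
    (univ : Finset (α ⊕ β)).image g
      = (univ : Finset α).image (g ∘ inl) ∪ (univ : Finset β).image (g ∘ inr) := by
  ext y
  rw [Finset.mem_union, Finset.mem_image, Finset.mem_image, Finset.mem_image]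
  constructor
  · rintro ⟨x, _, rfl⟩
    cases x with
    | inl a => exact Or.inl ⟨a, Finset.mem_univ _, rfl⟩
    | inr b => exact Or.inr ⟨b, Finset.mem_univ _, rfl⟩
  · rintro (⟨a, _, rfl⟩ | ⟨b, _, rfl⟩)
    · exact ⟨inl a, Finset.mem_univ _, rfl⟩
    · exact ⟨inr b, Finset.mem_univ _, rfl⟩

lemma colorCount_join {s c : ℕ} (hreg : H.IsRegularOfDegree s) (hs : 1 ≤ s)
    (hf : Set.MapsTo f ↑H.edgeFinset ↑(Finset.Icc 1 q))
    (hcc : colorCount H f = c) :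
    colorCount (joinG H H) (joinLabel f q M) = 2 * c := by
  set Δ := Fintype.card U * (2 * q + 1) + M.S with hΔ
  have h1 : (univ : Finset (U ⊕ U)).image (fplus (joinG H H) (joinLabel f q M))
      = ((univ : Finset U).image (fplus H f)).image (· + Δ)
        ∪ ((univ : Finset U).image (fplus H f)).image (· + (q * s + Δ)) := by
    rw [image_sum_type, Finset.image_image, Finset.image_image]
    congr 1
    · apply Finset.image_congr
      intro v _
      simp only [Function.comp_apply]
      exact fplus_joinLabel_inl H f q M v
    · apply Finset.image_congr
      intro v _
      simp only [Function.comp_apply]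
      rw [fplus_joinLabel_inr H f q M hreg v]
      ring
  have hdisj : Disjoint (((univ : Finset U).image (fplus H f)).image (· + Δ))
      (((univ : Finset U).image (fplus H f)).image (· + (q * s + Δ))) := by
    rw [Finset.disjoint_left]
    rintro x hx hy
    obtain ⟨a, ha, rfl⟩ := Finset.mem_image.mp hx
    obtain ⟨b, hb, hba⟩ := Finset.mem_image.mp hy
    obtain ⟨u, _, rfl⟩ := Finset.mem_image.mp ha
    obtain ⟨w, _, rfl⟩ := Finset.mem_image.mp hb
    have hu := fplus_bounds H f q hreg hs hf u
    have hw := fplus_bounds H f q hreg hs hf w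
    omega
  rw [colorCount, h1, Finset.card_union_of_disjoint hdisj,
    Finset.card_image_of_injective _ (add_left_injective Δ),
    Finset.card_image_of_injective _ (add_left_injective (q * s + Δ))]
  rw [colorCount] at hcc
  omega

lemma map_inl_mem_joinG_edgeFinset {e : Sym2 U} (he : e ∈ H.edgeFinset) :
    Sym2.map inl e ∈ (joinG H H).edgeFinset := by
  induction e with
  | _ a b =>
    rw [SimpleGraph.mem_edgeFinset] at he ⊢
    exact he

lemma map_inr_mem_joinG_edgeFinset {e : Sym2 U} (he : e ∈ H.edgeFinset) :
    Sym2.map inr e ∈ (joinG H H).edgeFinset := by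
  induction e with
  | _ a b =>
    rw [SimpleGraph.mem_edgeFinset] at he ⊢
    exact he

lemma cross_mem_joinG_edgeFinset (a b : U) :
    s(inl a, inr b) ∈ (joinG H H).edgeFinset := by
  rw [SimpleGraph.mem_edgeFinset]
  exact joinG_adj_inl_inr H a b

/-- classification of join edges -/
lemma joinG_edge_cases {e : Sym2 (U ⊕ U)} (he : e ∈ (joinG H H).edgeFinset) :
    (∃ a b, H.Adj a b ∧ e = s(inl a, inl b)) ∨ (∃ a b, H.Adj a b ∧ e = s(inr a, inr b))
      ∨ (∃ a b, e = s(inl a, inr b)) := by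
  rw [joinG_edgeFinset, Finset.mem_union, Finset.mem_union] at he
  rcases he with (h | h) | h
  · exact Or.inl ((mem_jE1 H _).mp h)
  · exact Or.inr (Or.inl ((mem_jE2 H _).mp h))
  · exact Or.inr (Or.inr ((mem_jE3 H _).mp h))

lemma joinLabel_bijOn (hf : Set.BijOn f ↑H.edgeFinset ↑(Finset.Icc 1 q)) :
    Set.BijOn (joinLabel f q M) ↑((joinG H H).edgeFinset)
      ↑(Finset.Icc 1 (2 * q + Fintype.card U * Fintype.card U)) := by
  obtain ⟨hmap, hinj, hsurj⟩ := hf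
  have hval : ∀ {a b : U}, H.Adj a b → 1 ≤ f s(a, b) ∧ f s(a, b) ≤ q := by
    intro a b hab
    have := hmap (Finset.mem_coe.mpr (SimpleGraph.mem_edgeFinset.mpr ((SimpleGraph.mem_edgeSet H).mpr hab)))
    rw [Finset.mem_coe, Finset.mem_Icc] at this
    exact this
  refine ⟨?_, ?_, ?_⟩
  · intro e he
    rw [Finset.mem_coe] at he
    rw [Finset.mem_coe, Finset.mem_Icc]
    rcases joinG_edge_cases H he with ⟨a, b, hab, rfl⟩ | ⟨a, b, hab, rfl⟩ | ⟨a, b, rfl⟩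
    · have := hval hab
      rw [joinLabel_ll]
      constructor <;> [omega; nlinarith [Fintype.card U]]
    · have := hval hab
      rw [joinLabel_rr]
      omega
    · have := M.lt (Fintype.equivFin U a) (Fintype.equivFin U b)
      rw [joinLabel_lr]
      omega
  · intro e1 h1 e2 h2 hv
    rw [Finset.mem_coe] at h1 h2
    rcases joinG_edge_cases H h1 with ⟨a, b, hab, rfl⟩ | ⟨a, b, hab, rfl⟩ | ⟨a, b, rfl⟩ <;>
      rcases joinG_edge_cases H h2 with ⟨a', b', hab', rfl⟩ | ⟨a', b', hab', rfl⟩ |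
        ⟨a', b', rfl⟩
    · rw [joinLabel_ll, joinLabel_ll] at hv
      have := hinj (Finset.mem_coe.mpr (SimpleGraph.mem_edgeFinset.mpr ((SimpleGraph.mem_edgeSet H).mpr hab)))
        (Finset.mem_coe.mpr (SimpleGraph.mem_edgeFinset.mpr ((SimpleGraph.mem_edgeSet H).mpr hab'))) hv
      rw [← Sym2.map_pair_eq, ← Sym2.map_pair_eq, this]
    · rw [joinLabel_ll, joinLabel_rr] at hv
      have := hval hab; have := hval hab'
      omega
    · rw [joinLabel_ll, joinLabel_lr] at hv
      have := hval hab
      omega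
    · rw [joinLabel_rr, joinLabel_ll] at hv
      have := hval hab; have := hval hab'
      omega
    · rw [joinLabel_rr, joinLabel_rr] at hv
      have hv' : f s(a, b) = f s(a', b') := by omega
      have := hinj (Finset.mem_coe.mpr (SimpleGraph.mem_edgeFinset.mpr ((SimpleGraph.mem_edgeSet H).mpr hab)))
        (Finset.mem_coe.mpr (SimpleGraph.mem_edgeFinset.mpr ((SimpleGraph.mem_edgeSet H).mpr hab'))) hv'
      rw [← Sym2.map_pair_eq, ← Sym2.map_pair_eq, this]
    · rw [joinLabel_rr, joinLabel_lr] at hv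
      have := hval hab
      have := M.lt (Fintype.equivFin U a') (Fintype.equivFin U b')
      omega
    · rw [joinLabel_lr, joinLabel_ll] at hv
      have := hval hab'
      omega
    · rw [joinLabel_lr, joinLabel_rr] at hv
      have := hval hab'
      have := M.lt (Fintype.equivFin U a) (Fintype.equivFin U b)
      omega
    · rw [joinLabel_lr, joinLabel_lr] at hv
      have hM : M.f (Fintype.equivFin U a) (Fintype.equivFin U b)
          = M.f (Fintype.equivFin U a') (Fintype.equivFin U b') := by omega
      obtain ⟨hx, hy⟩ := M.inj _ _ _ _ hM
      have ha : a = a' := (Fintype.equivFin U).injective hx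
      have hb : b = b' := (Fintype.equivFin U).injective hy
      rw [ha, hb]
  · intro y hy
    rw [Finset.mem_coe, Finset.mem_Icc] at hy
    rcases Nat.lt_or_ge q y with hgt | hle
    · rcases Nat.lt_or_ge (2 * q) y with hgt2 | hle2
      · -- cross edge
        have hy3 : y - (2 * q + 1) < Fintype.card U * Fintype.card U := by omega
        obtain ⟨i, j, hij⟩ := M.surj _ hy3
        refine ⟨s(inl ((Fintype.equivFin U).symm i), inr ((Fintype.equivFin U).symm j)),
          Finset.mem_coe.mpr (cross_mem_joinG_edgeFinset H _ _), ?_⟩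
        rw [joinLabel_lr, Equiv.apply_symm_apply, Equiv.apply_symm_apply, hij]
        omega
      · -- second copy
        have : y - q ∈ (Finset.Icc 1 q : Finset ℕ) := by
          rw [Finset.mem_Icc]; omega
        obtain ⟨e, he, hev⟩ := hsurj (Finset.mem_coe.mpr this)
        rw [Finset.mem_coe] at he
        refine ⟨Sym2.map inr e, Finset.mem_coe.mpr (map_inr_mem_joinG_edgeFinset H he), ?_⟩
        rw [joinLabel_map_inr, hev]
        omega
    · -- first copy
      have : y ∈ (Finset.Icc 1 q : Finset ℕ) := by rw [Finset.mem_Icc]; omega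
      obtain ⟨e, he, hev⟩ := hsurj (Finset.mem_coe.mpr this)
      rw [Finset.mem_coe] at he
      exact ⟨Sym2.map inl e, Finset.mem_coe.mpr (map_inl_mem_joinG_edgeFinset H he),
        by rw [joinLabel_map_inl, hev]⟩

end MoreLemmas


section FinalLemmas

set_option linter.unusedSectionVars false

open Sum

variable {U : Type*} [Fintype U] [DecidableEq U] (H : SimpleGraph U) [DecidableRel H.Adj]

lemma joinLabel_isLocalAntimagic {f : Sym2 U → ℕ} {s q : ℕ}
    (hq : H.edgeFinset.card = q)
    (hreg : H.IsRegularOfDegree s) (hs : 1 ≤ s)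
    (hf : IsLocalAntimagic H f) (M : SM (Fintype.card U)) :
    IsLocalAntimagic (joinG H H) (joinLabel f q M) := by
  obtain ⟨hbij, hdist⟩ := hf
  rw [hq] at hbij
  constructor
  · have hcard : (joinG H H).edgeFinset.card
        = 2 * q + Fintype.card U * Fintype.card U := by
      rw [joinG_card_edgeFinset, hq]
    rw [hcard]
    exact joinLabel_bijOn H f q M hbij
  · rintro (u | u) (v | v) hadj <;> [skip; skip; skip; skip]
    · rw [fplus_joinLabel_inl, fplus_joinLabel_inl]
      intro h
      exact hdist ((joinG_adj_inl_inl H u v).mp hadj) (by omega)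
    · rw [fplus_joinLabel_inl, fplus_joinLabel_inr H f q M hreg]
      have hu := fplus_bounds H f q hreg hs hbij.mapsTo u
      have hv := fplus_bounds H f q hreg hs hbij.mapsTo v
      have h3 : q * s = s * q := mul_comm q s
      omega
    · rw [fplus_joinLabel_inl, fplus_joinLabel_inr H f q M hreg]
      have hu := fplus_bounds H f q hreg hs hbij.mapsTo u
      have hv := fplus_bounds H f q hreg hs hbij.mapsTo v
      have h3 : q * s = s * q := mul_comm q s
      omega
    · rw [fplus_joinLabel_inr H f q M hreg, fplus_joinLabel_inr H f q M hreg]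
      intro h
      exact hdist ((joinG_adj_inr_inr H u v).mp hadj) (by omega)

lemma chromaticNumber_le_colorCount {W : Type*} [Fintype W] [DecidableEq W]
    (G' : SimpleGraph W) [DecidableRel G'.Adj] (g : Sym2 W → ℕ)
    (hd : ∀ ⦃u v : W⦄, G'.Adj u v → fplus G' g u ≠ fplus G' g v) :
    G'.chromaticNumber ≤ (colorCount G' g : ℕ∞) := by
  classical
  have C : G'.Coloring ↥((univ : Finset W).image (fplus G' g)) :=
    SimpleGraph.Coloring.mk
      (fun v => ⟨fplus G' g v, Finset.mem_image_of_mem _ (Finset.mem_univ v)⟩)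
      (fun {u v} hadj h => hd hadj (congrArg Subtype.val h))
  have hcol := C.colorable
  rw [Fintype.card_coe] at hcol
  exact hcol.chromaticNumber_le

lemma chromatic_join [Nonempty U] {c : ℕ} (hc : H.chromaticNumber = (c : ℕ∞)) :
    (joinG H H).chromaticNumber = ((2 * c : ℕ) : ℕ∞) := by
  have hcol : H.Colorable c := SimpleGraph.chromaticNumber_le_iff_colorable.mp (le_of_eq hc)
  obtain ⟨C⟩ := hcol
  have valid : ∀ {x y : U ⊕ U}, (joinG H H).Adj x y → Sum.map C C x ≠ Sum.map C C y := by
    rintro (a | a) (b | b) hadj h <;> simp only [Sum.map_inl, Sum.map_inr] at h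
    · exact C.valid ((joinG_adj_inl_inl H a b).mp hadj) (by simpa using h)
    · simp at h
    · simp at h
    · exact C.valid ((joinG_adj_inr_inr H a b).mp hadj) (by simpa using h)
  have CJ : (joinG H H).Coloring (Fin c ⊕ Fin c) := SimpleGraph.Coloring.mk _ valid
  have hup : (joinG H H).Colorable (2 * c) := by
    have := CJ.colorable
    rwa [Fintype.card_sum, Fintype.card_fin, ← two_mul] at this
  have hle := hup.chromaticNumber_le
  have hne : (joinG H H).chromaticNumber ≠ ⊤ := (lt_of_le_of_lt hle (WithTop.coe_lt_top _)).ne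
  obtain ⟨N, hN⟩ := WithTop.ne_top_iff_exists.mp hne
  have hcolN : (joinG H H).Colorable N :=
    SimpleGraph.chromaticNumber_le_iff_colorable.mp (le_of_eq hN.symm)
  obtain ⟨D⟩ := hcolN
  set L := (univ : Finset U).image (fun v => D (inl v)) with hLdef
  set R := (univ : Finset U).image (fun v => D (inr v)) with hRdef
  have hdisj : Disjoint L R := by
    rw [Finset.disjoint_left]
    rintro x hx hy
    obtain ⟨u, _, rfl⟩ := Finset.mem_image.mp hx
    obtain ⟨w, _, hw⟩ := Finset.mem_image.mp hy
    exact D.valid (joinG_adj_inl_inr H u w) hw.symm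
  have hcL : H.Colorable L.card := by
    have CL : H.Coloring ↥L := SimpleGraph.Coloring.mk
      (fun v => ⟨D (inl v), Finset.mem_image_of_mem _ (Finset.mem_univ v)⟩)
      (fun {u v} hadj h =>
        D.valid ((joinG_adj_inl_inl H u v).mpr hadj) (congrArg Subtype.val h))
    have := CL.colorable
    rwa [Fintype.card_coe] at this
  have hcR : H.Colorable R.card := by
    have CR : H.Coloring ↥R := SimpleGraph.Coloring.mk
      (fun v => ⟨D (inr v), Finset.mem_image_of_mem _ (Finset.mem_univ v)⟩)
      (fun {u v} hadj h =>
        D.valid ((joinG_adj_inr_inr H u v).mpr hadj) (congrArg Subtype.val h))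
    have := CR.colorable
    rwa [Fintype.card_coe] at this
  have h1 : c ≤ L.card := by
    have := hcL.chromaticNumber_le
    rw [hc] at this
    exact_mod_cast this
  have h2 : c ≤ R.card := by
    have := hcR.chromaticNumber_le
    rw [hc] at this
    exact_mod_cast this
  have hsum : L.card + R.card ≤ N := by
    have hcu : (L ∪ R).card ≤ Fintype.card (Fin N) := by
      rw [← Finset.card_univ]
      exact Finset.card_le_card (Finset.subset_univ _)
    rw [Finset.card_union_of_disjoint hdisj] at hcu
    rwa [Fintype.card_fin] at hcu
  have hup' : N ≤ 2 * c := by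
    rw [← hN] at hle
    exact Nat.cast_le.mp hle
  have : N = 2 * c := by omega
  rw [← hN, this]
  rfl

lemma chiLA_eq_of {W : Type*} [Fintype W] [DecidableEq W]
    (G' : SimpleGraph W) [DecidableRel G'.Adj] {t : ℕ}
    (hw : ∃ g, IsLocalAntimagic G' g ∧ colorCount G' g = t)
    (hchrom : G'.chromaticNumber = (t : ℕ∞)) : chiLA G' = t := by
  have hmem : t ∈ {t | ∃ g, IsLocalAntimagic G' g ∧ colorCount G' g = t} := hw
  apply le_antisymm (Nat.sInf_le hmem)
  apply le_csInf ⟨t, hmem⟩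
  rintro m ⟨g, hg, rfl⟩
  have hle := chromaticNumber_le_colorCount G' g hg.2
  rw [hchrom] at hle
  exact_mod_cast hle

lemma step_all {s c : ℕ} (hU : 3 ≤ Fintype.card U) (hs : 2 ≤ s)
    (hreg : H.IsRegularOfDegree s)
    (hw : ∃ g, IsLocalAntimagic H g ∧ colorCount H g = c)
    (hchrom : H.chromaticNumber = (c : ℕ∞)) :
    (∃ g, IsLocalAntimagic (joinG H H) g ∧ colorCount (joinG H H) g = 2 * c) ∧
      (joinG H H).chromaticNumber = ((2 * c : ℕ) : ℕ∞) := by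
  obtain ⟨f, hf, hcc⟩ := hw
  obtain ⟨M⟩ := sm_exists (Fintype.card U) hU
  have hne : Nonempty U := by
    rw [← Fintype.card_pos_iff]
    omega
  have hmaps : Set.MapsTo f ↑H.edgeFinset ↑(Finset.Icc 1 H.edgeFinset.card) := hf.1.mapsTo
  refine ⟨⟨joinLabel f H.edgeFinset.card M,
    joinLabel_isLocalAntimagic H rfl hreg (by omega) hf M,
    colorCount_join H f H.edgeFinset.card M hreg (by omega) hmaps hcc⟩, ?_⟩
  exact chromatic_join H hchrom

lemma chiLA_of_isEmpty {W : Type*} [Fintype W] [DecidableEq W]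
    (G' : SimpleGraph W) [DecidableRel G'.Adj] (h : IsEmpty W) :
    ∃ g, IsLocalAntimagic G' g ∧ colorCount G' g = 0 := by
  have hedge : G'.edgeFinset = ∅ := by
    apply Finset.eq_empty_of_forall_notMem
    intro e he
    induction e with
    | _ a b => exact h.false a
  refine ⟨fun _ => 0, ⟨?_, ?_⟩, ?_⟩
  · rw [hedge]
    simp only [Finset.card_empty, Finset.coe_empty]
    have : (Finset.Icc 1 0 : Finset ℕ) = ∅ := by decide
    rw [this, Finset.coe_empty]
    exact ⟨fun x hx => hx.elim, fun x hx => hx.elim, fun x hx => hx.elim⟩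
  · intro u
    exact h.elim u
  · rw [colorCount]
    have : (univ : Finset W) = ∅ := Finset.univ_eq_empty
    rw [this, Finset.image_empty, Finset.card_empty]

lemma chrom_of_isEmpty {W : Type*} [Fintype W] [DecidableEq W]
    (G' : SimpleGraph W) [DecidableRel G'.Adj] (h : IsEmpty W) :
    G'.chromaticNumber = ((0 : ℕ) : ℕ∞) := by
  have hcol : G'.Colorable 0 :=
    ⟨SimpleGraph.Coloring.mk (fun v => h.elim v) (fun {u v} hadj => h.elim u)⟩
  exact le_antisymm (by exact_mod_cast hcol.chromaticNumber_le) zero_le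

lemma iterV_isEmpty {V : Type*} (hV : IsEmpty V) : ∀ k, IsEmpty (iterV V k)
  | 0 => hV
  | k + 1 => by
    have := iterV_isEmpty hV k
    exact ⟨fun x => by cases x with
      | inl a => exact this.false a
      | inr a => exact this.false a⟩

end FinalLemmas

theorem chiLA_iterated_self_join (G : SimpleGraph V) [DecidableRel G.Adj] (r p χ : ℕ)
    (hr : 2 ≤ r) (hp : Fintype.card V = p) (hreg : G.IsRegularOfDegree r)
    (h1 : chiLA G = χ) (h2 : G.chromaticNumber = (χ : ℕ∞)) (k : ℕ) :
    (iterJoin G k).IsRegularOfDegree (r + (2 ^ k - 1) * p) ∧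
      Fintype.card (iterV V k) = 2 ^ k * p ∧
      chiLA (iterJoin G k) = 2 ^ k * χ ∧
      (iterJoin G k).chromaticNumber = ((2 ^ k * χ : ℕ) : ℕ∞) := by
  rcases isEmpty_or_nonempty V with hV | hV
  · -- degenerate case: no vertices
    have hp0 : p = 0 := by
      rw [← hp]
      exact Fintype.card_eq_zero_iff.mpr hV
    have hE : IsEmpty (iterV V k) := iterV_isEmpty hV k
    have hχ : χ = 0 := by
      obtain ⟨g, hg, hcc⟩ := chiLA_of_isEmpty G hV
      have h0 : (0 : ℕ) ∈ {t | ∃ f, IsLocalAntimagic G f ∧ colorCount G f = t} :=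
        ⟨g, hg, hcc⟩
      have := Nat.sInf_le h0
      rw [chiLA] at h1
      omega
    refine ⟨fun v => hE.elim v, ?_, ?_, ?_⟩
    · have : Fintype.card (iterV V k) = 0 := Fintype.card_eq_zero_iff.mpr hE
      rw [this, hp0, Nat.mul_zero]
    · obtain ⟨g, hg, hcc⟩ := chiLA_of_isEmpty (iterJoin G k) hE
      have h0 : (0 : ℕ) ∈ {t | ∃ f, IsLocalAntimagic (iterJoin G k) f
          ∧ colorCount (iterJoin G k) f = t} := ⟨g, hg, hcc⟩
      have hle := Nat.sInf_le h0
      rw [chiLA, hχ, Nat.mul_zero]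
      omega
    · rw [chrom_of_isEmpty (iterJoin G k) hE, hχ, Nat.mul_zero]
  · -- main case
    have hp3 : 3 ≤ p := by
      obtain ⟨v⟩ := hV
      have hlt := G.degree_lt_card_verts v
      rw [hreg v, hp] at hlt
      omega
    have hSne : ∃ g, IsLocalAntimagic G g ∧ colorCount G g = χ := by
      rcases Set.eq_empty_or_nonempty
        {t | ∃ f, IsLocalAntimagic G f ∧ colorCount G f = t} with hSe | hSne'
      · exfalso
        have hzero : chiLA G = 0 := by
          rw [chiLA, hSe, Nat.sInf_empty]
        have hχ0 : χ = 0 := by omega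
        have hpos := SimpleGraph.chromaticNumber_pos (G.colorable_of_fintype)
        rw [h2, hχ0] at hpos
        simp at hpos
      · have hmem := Nat.sInf_mem hSne'
        rw [chiLA] at h1
        rw [h1] at hmem
        exact hmem
    have key : ∀ m, (iterJoin G m).IsRegularOfDegree (r + (2 ^ m - 1) * p) ∧
        Fintype.card (iterV V m) = 2 ^ m * p ∧
        (∃ g, IsLocalAntimagic (iterJoin G m) g ∧ colorCount (iterJoin G m) g = 2 ^ m * χ) ∧
        (iterJoin G m).chromaticNumber = ((2 ^ m * χ : ℕ) : ℕ∞) := by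
      intro m
      induction m with
      | zero =>
        refine ⟨by simp only [pow_zero, Nat.sub_self, zero_mul, add_zero, one_mul]; exact hreg, by simp only [pow_zero, Nat.sub_self, zero_mul, add_zero, one_mul]; exact hp, by simp only [pow_zero, Nat.sub_self, zero_mul, add_zero, one_mul]; exact hSne,
          by simp only [pow_zero, Nat.sub_self, zero_mul, add_zero, one_mul]; exact h2⟩
      | succ m ih =>
        obtain ⟨ihreg, ihcard, ihw, ihchrom⟩ := ih
        have h2m : 1 ≤ 2 ^ m := Nat.one_le_two_pow
        have hple : p ≤ 2 ^ m * p := Nat.le_mul_of_pos_left p (by omega)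
        have hU3 : 3 ≤ Fintype.card (iterV V m) := by
          rw [ihcard]
          omega
        have hs2 : 2 ≤ r + (2 ^ m - 1) * p := by omega
        have hstep := step_all (iterJoin G m) hU3 hs2 ihreg ihw ihchrom
        have hpow : 2 ^ (m + 1) = 2 ^ m + 2 ^ m := by
          rw [pow_succ]
          ring
        have harith : r + (2 ^ m - 1) * p + 2 ^ m * p = r + (2 ^ (m + 1) - 1) * p := by
          obtain ⟨a, ha⟩ : ∃ a, 2 ^ m = 1 + a := ⟨2 ^ m - 1, by omega⟩
          rw [hpow, ha]
          have e1 : 1 + a - 1 = a := by omega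
          have e2 : 1 + a + (1 + a) - 1 = 1 + 2 * a := by omega
          rw [e1, e2]
          ring
        have hcolor : 2 * (2 ^ m * χ) = 2 ^ (m + 1) * χ := by
          rw [pow_succ]
          ring
        refine ⟨?_, ?_, ?_, ?_⟩
        · have hr' := joinG_regular (iterJoin G m) ihreg
          rw [ihcard] at hr'
          rw [← harith]
          exact hr'
        · have hcs : Fintype.card (iterV V (m + 1))
              = Fintype.card (iterV V m) + Fintype.card (iterV V m) := Fintype.card_sum
          rw [hcs, ihcard, hpow]
          ring
        · obtain ⟨g, hg, hcc⟩ := hstep.1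
          refine ⟨g, hg, ?_⟩
          rw [← hcolor]
          exact hcc
        · rw [← hcolor]
          exact hstep.2
    obtain ⟨k1, k2, k3, k4⟩ := key k
    exact ⟨k1, k2, chiLA_eq_of _ k3 k4, k4⟩
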